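/- For every integer n ≥ 2 there exists a constant C = C(n) > 0 such that every number field K of degree n contains an element α ∈ 𝒪_K which is irrational and satisfies ‖α‖ ≤ C · D_K^{1/(2(n−1))}. -/

import Mathlib

open NumberField

/-- `‖x‖ = ∑_σ |σ(x)|`, the sum running over all field embeddings `σ : K → ℂ`. -/
noncomputable def embNorm (K : Type*) [Field K] [NumberField K] (x : K) : ℝ :=
  ∑ σ : K →+* ℂ, ‖σ x‖

open NumberField.InfinitePlace NumberField.mixedEmbedding MeasureTheory Module
open scoped NNReal ENNReal

/-- If the image of an algebraic integer in `K` is rational, then it comes from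
a rational integer. -/
private lemma exists_int_of_mem_range (K : Type) [Field K] [NumberField K] (a : 𝓞 K)
    (h : (algebraMap (𝓞 K) K a) ∈ Set.range (algebraMap ℚ K)) :
    ∃ m : ℤ, (algebraMap (𝓞 K) K a) = (m : K) := by
  obtain ⟨q, hq⟩ := h
  have hint : IsIntegral ℤ (algebraMap (𝓞 K) K a) := RingOfIntegers.isIntegral_coe a
  rw [← hq] at hint
  have hq' : IsIntegral ℤ q := (isIntegral_algebraMap_iff (algebraMap ℚ K).injective).mp hint
  obtain ⟨m, hm⟩ := IsIntegrallyClosed.isIntegral_iff.mp hq'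
  refine ⟨m, by rw [← hq, ← hm]; simp⟩

/-- For every integer `n ≥ 2` there exists a constant `C = C(n) > 0` such that
every number field `K` of degree `n` contains an element `α ∈ 𝒪_K` which is irrational and
satisfies `‖α‖ ≤ C · D_K^{1/(2(n−1))}`. -/
theorem stmt2 (n : ℕ) (hn : 2 ≤ n) :
    ∃ C : ℝ, 0 < C ∧
      ∀ (K : Type) [Field K] [NumberField K],
        Module.finrank ℚ K = n →
        ∃ α : 𝓞 K,
          (algebraMap (𝓞 K) K α) ∉ Set.range (algebraMap ℚ K) ∧
          embNorm K (algebraMap (𝓞 K) K α) ≤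
            C * (|discr K| : ℝ) ^ ((1 : ℝ) / (2 * ((n : ℝ) - 1))) := by
  classical
  refine ⟨(n : ℝ) * 2 ^ (2 * n + 1), by positivity, ?_⟩
  intro K _ _ hK
  set ex : ℝ := (1 : ℝ) / (2 * ((n : ℝ) - 1)) with hex_def
  have hn1 : (1 : ℝ) ≤ (n : ℝ) - 1 := by
    have : (2 : ℝ) ≤ (n : ℝ) := by exact_mod_cast hn
    linarith
  have hex_pos : 0 < ex := by positivity
  set D : ℝ≥0 := ‖discr K‖₊ with hD_def
  have hD1 : 1 ≤ D := by
    rw [← NNReal.coe_le_coe, hD_def, coe_nnnorm, Int.norm_eq_abs, NNReal.coe_one]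
    exact_mod_cast Int.one_le_abs (discr_ne_zero K)
  set t : ℝ≥0 := 2 ^ (2 * n) * D ^ ex with ht_def
  have ht1 : 1 ≤ t := by
    rw [ht_def]
    have h1 : (1 : ℝ≥0) ≤ 2 ^ (2 * n) := one_le_pow₀ one_le_two
    have h2 : (1 : ℝ≥0) ≤ D ^ ex := by
      have := NNReal.rpow_le_rpow hD1 hex_pos.le
      rwa [NNReal.one_rpow] at this
    exact one_le_mul h1 h2
  -- the key power computation
  have htpow : t ^ (n - 1) = 2 ^ (2 * n * (n - 1)) * NNReal.sqrt D := by
    rw [ht_def, mul_pow, ← pow_mul, ← NNReal.rpow_natCast (D ^ ex), ← NNReal.rpow_mul,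
      NNReal.sqrt_eq_rpow]
    have hcast : ((n - 1 : ℕ) : ℝ) = (n : ℝ) - 1 := by
      push_cast [Nat.cast_sub (by omega : 1 ≤ n)]; ring
    have hne : (n : ℝ) - 1 ≠ 0 := by linarith
    have hexp : ex * ((n - 1 : ℕ) : ℝ) = 1 / 2 := by
      rw [hex_def, hcast]; field_simp
    rw [hexp]
  -- the Minkowski bound is smaller than `t ^ (n-1)`
  have hMB : minkowskiBound K ↑1 < ((t ^ (n - 1) : ℝ≥0) : ℝ≥0∞) := by
    have h1 : minkowskiBound K ↑1 ≤ ((NNReal.sqrt D * 2 ^ n : ℝ≥0) : ℝ≥0∞) := by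
      rw [minkowskiBound, volume_fundamentalDomain_fractionalIdealLatticeBasis,
        volume_fundamentalDomain_latticeBasis]
      simp only [Units.val_one, FractionalIdeal.absNorm_one, Rat.cast_one, ENNReal.ofReal_one,
        one_mul, mixedEmbedding.finrank, hK]
      rw [ENNReal.coe_mul, ENNReal.coe_pow]
      calc (2 : ℝ≥0∞)⁻¹ ^ nrComplexPlaces K * (NNReal.sqrt D : ℝ≥0∞) * 2 ^ n
          ≤ 1 * (NNReal.sqrt D : ℝ≥0∞) * 2 ^ n := by
            gcongr
            exact pow_le_one₀ (by simp) (ENNReal.inv_le_one.mpr one_le_two)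
        _ = (NNReal.sqrt D : ℝ≥0∞) * (2 : ℝ≥0)  ^ n := by
            rw [one_mul]; norm_cast
    refine h1.trans_lt ?_
    rw [ENNReal.coe_lt_coe, htpow]
    have hsD : 0 < NNReal.sqrt D := by
      rw [← NNReal.sqrt_zero]
      exact NNReal.sqrt_lt_sqrt.mpr (lt_of_lt_of_le zero_lt_one hD1)
    calc NNReal.sqrt D * 2 ^ n < NNReal.sqrt D * 2 ^ (2 * n * (n - 1)) := by
          refine mul_lt_mul_of_pos_left ?_ hsD
          refine pow_lt_pow_right₀ one_lt_two ?_
          have h2 : 2 * n * 1 ≤ 2 * n * (n - 1) := Nat.mul_le_mul_left _ (by omega)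
          omega
      _ = 2 ^ (2 * n * (n - 1)) * NNReal.sqrt D := mul_comm _ _
  -- reduce to finding an irrational integer with all embeddings bounded by `2 t`
  suffices h : ∃ a : 𝓞 K, (algebraMap (𝓞 K) K a ∉ Set.range (algebraMap ℚ K)) ∧
      ∀ σ : K →+* ℂ, ‖σ (algebraMap (𝓞 K) K a)‖ ≤ 2 * (t : ℝ) by
    obtain ⟨a, h1, h2⟩ := h
    refine ⟨a, h1, ?_⟩
    have hsum : embNorm K (algebraMap (𝓞 K) K a) ≤ (n : ℝ) * (2 * (t : ℝ)) := by
      rw [embNorm]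
      calc ∑ σ : K →+* ℂ, ‖σ (algebraMap (𝓞 K) K a)‖
          ≤ ∑ _σ : K →+* ℂ, 2 * (t : ℝ) := Finset.sum_le_sum (fun σ _ => h2 σ)
        _ = (Fintype.card (K →+* ℂ) : ℝ) * (2 * (t : ℝ)) := by
            rw [Finset.sum_const, Finset.card_univ, nsmul_eq_mul]
        _ = (n : ℝ) * (2 * (t : ℝ)) := by rw [Embeddings.card K ℂ, hK]
    refine hsum.trans_eq ?_
    have hDR : ((D : ℝ≥0) : ℝ) = ((|discr K| : ℤ) : ℝ) := by
      rw [hD_def, coe_nnnorm, Int.norm_eq_abs, Int.cast_abs]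
    rw [ht_def]
    push_cast [NNReal.coe_rpow, hDR]
    ring
  -- main case distinction
  by_cases hre : ∃ w : InfinitePlace K, IsReal w
  · -- there is a real place
    obtain ⟨w₀, hw₀⟩ := hre
    set f : InfinitePlace K → ℝ≥0 := fun w => if w = w₀ then 1 else t with hf_def
    have hprod : ∏ w, (f w) ^ (mult w) = t ^ (n - 1) := by
      rw [← Finset.mul_prod_erase Finset.univ _ (Finset.mem_univ w₀)]
      rw [show f w₀ = 1 from if_pos rfl, one_pow, one_mul]
      rw [Finset.prod_congr rfl (fun w hw => by
        rw [show f w = t from if_neg (Finset.ne_of_mem_erase hw)]),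
        Finset.prod_pow_eq_pow_sum]
      congr 1
      have hsm : ∑ w : InfinitePlace K, mult w = n := by rw [sum_mult_eq, hK]
      have h' : mult w₀ + ∑ w ∈ Finset.univ.erase w₀, mult w = n := by
        rw [Finset.add_sum_erase _ _ (Finset.mem_univ w₀), hsm]
      have hm1 : mult w₀ = 1 := by rw [mult, if_pos hw₀]
      omega
    have hvol : minkowskiBound K ↑1 < volume (convexBodyLT K f) := by
      rw [convexBodyLT_volume]
      refine hMB.trans_le ?_
      refine le_trans ?_ (le_mul_of_one_le_left zero_le
        (by exact_mod_cast one_le_convexBodyLTFactor K))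
      rw [← hprod]
    obtain ⟨a, ha0, haw⟩ := exists_ne_zero_mem_ringOfIntegers_lt K hvol
    have haK : ∀ w : InfinitePlace K, w (algebraMap (𝓞 K) K a) < f w := haw
    refine ⟨a, ?_, ?_⟩
    · intro hmem
      obtain ⟨m, hm⟩ := exists_int_of_mem_range K a hmem
      have hm0 : m ≠ 0 := by
        rintro rfl
        apply ha0
        have : algebraMap (𝓞 K) K a = 0 := by simpa using hm
        exact_mod_cast (map_eq_zero_iff _ (RingOfIntegers.coe_injective (K := K))).mp this
      have hlt : w₀ (algebraMap (𝓞 K) K a) < 1 := by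
        have := haK w₀
        rwa [show f w₀ = 1 from if_pos rfl] at this
      rw [hm] at hlt
      have hge : (1 : ℝ) ≤ w₀ ((m : ℤ) : K) := by
        rw [← norm_embedding_eq, map_intCast, Complex.norm_intCast]
        exact_mod_cast Int.one_le_abs hm0
      exact absurd hlt (not_lt.mpr (by exact_mod_cast hge))
    · intro σ
      have := haK (InfinitePlace.mk σ)
      rw [InfinitePlace.apply] at this
      have hfle : f (InfinitePlace.mk σ) ≤ t := by
        rw [hf_def]
        dsimp only
        split_ifs
        · exact ht1
        · exact le_rfl
      have h2t : (t : ℝ) ≤ 2 * (t : ℝ) := by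
        have : (0:ℝ) ≤ (t : ℝ) := t.coe_nonneg
        linarith
      exact le_trans (le_trans this.le (by exact_mod_cast hfle)) h2t
  · -- all places are complex
    have hcx : ∀ w : InfinitePlace K, IsComplex w := by
      intro w
      rcases not_isReal_iff_isComplex.mp (fun h => hre ⟨w, h⟩) with h
      exact h
    obtain ⟨w⟩ : Nonempty (InfinitePlace K) := inferInstance
    let w₀ : {w : InfinitePlace K // IsComplex w} := ⟨w, hcx w⟩
    set f : InfinitePlace K → ℝ≥0 := fun w => if w = (w₀ : InfinitePlace K) then NNReal.sqrt t
      else t with hf_def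
    have hprod : ∏ w, (f w) ^ (mult w) = t ^ (n - 1) := by
      rw [← Finset.mul_prod_erase Finset.univ _ (Finset.mem_univ (w₀ : InfinitePlace K))]
      have hm2 : mult (w₀ : InfinitePlace K) = 2 := by
        rw [mult, if_neg (not_isReal_iff_isComplex.mpr w₀.prop)]
      rw [show f (w₀ : InfinitePlace K) = NNReal.sqrt t from if_pos rfl, hm2, NNReal.sq_sqrt]
      rw [Finset.prod_congr rfl (fun w hw => by
        rw [show f w = t from if_neg (Finset.ne_of_mem_erase hw)]),
        Finset.prod_pow_eq_pow_sum]
      have hsm : ∑ w : InfinitePlace K, mult w = n := by rw [sum_mult_eq, hK]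
      have h' : mult (w₀ : InfinitePlace K) + ∑ w ∈ Finset.univ.erase (w₀ : InfinitePlace K),
          mult w = n := by
        rw [Finset.add_sum_erase _ _ (Finset.mem_univ _), hsm]
      have hsum2 : ∑ w ∈ Finset.univ.erase (w₀ : InfinitePlace K), mult w = n - 2 := by omega
      rw [hsum2, ← pow_succ']
      congr 1
      omega
    have hvol : minkowskiBound K ↑1 < volume (convexBodyLT' K f w₀) := by
      rw [convexBodyLT'_volume]
      refine hMB.trans_le ?_
      refine le_trans ?_ (le_mul_of_one_le_left zero_le
        (by exact_mod_cast one_le_convexBodyLT'Factor K))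
      rw [← hprod]
    obtain ⟨a, ha0, haw, hRe, hIm⟩ := exists_ne_zero_mem_ringOfIntegers_lt' K w₀ hvol
    have hfw₀ : ((f (w₀ : InfinitePlace K) : ℝ)) ^ 2 = (t : ℝ) := by
      rw [show f (w₀ : InfinitePlace K) = NNReal.sqrt t from if_pos rfl]
      exact_mod_cast congrArg NNReal.toReal (NNReal.sq_sqrt t)
    refine ⟨a, ?_, ?_⟩
    · intro hmem
      obtain ⟨m, hm⟩ := exists_int_of_mem_range K a hmem
      have hm0 : m ≠ 0 := by
        rintro rfl
        apply ha0
        have : algebraMap (𝓞 K) K a = 0 := by simpa using hm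
        exact_mod_cast (map_eq_zero_iff _ (RingOfIntegers.coe_injective (K := K))).mp this
      have : |(((w₀ : InfinitePlace K).embedding) (algebraMap (𝓞 K) K a)).re| < 1 := hRe
      rw [hm, map_intCast] at this
      have : |(m : ℝ)| < 1 := by simpa using this
      have : |m| < 1 := by exact_mod_cast this
      exact hm0 (Int.abs_lt_one_iff.mp this)
    · intro σ
      by_cases hσ : InfinitePlace.mk σ = (w₀ : InfinitePlace K)
      · have h1 : ‖σ (algebraMap (𝓞 K) K a)‖ =
            (w₀ : InfinitePlace K) (algebraMap (𝓞 K) K a) := by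
          rw [← InfinitePlace.apply, hσ]
        have h2 : (w₀ : InfinitePlace K) (algebraMap (𝓞 K) K a) ≤
            |(((w₀ : InfinitePlace K).embedding) (algebraMap (𝓞 K) K a)).re| +
            |(((w₀ : InfinitePlace K).embedding) (algebraMap (𝓞 K) K a)).im| := by
          rw [← norm_embedding_eq]
          exact Complex.norm_le_abs_re_add_abs_im _
        rw [h1]
        have hIm' : |(((w₀ : InfinitePlace K).embedding) (algebraMap (𝓞 K) K a)).im| < (t : ℝ) := by
          rw [← hfw₀]; exact hIm
        have h1t : (1 : ℝ) ≤ (t : ℝ) := by exact_mod_cast ht1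
        linarith
      · have := haw (InfinitePlace.mk σ) hσ
        rw [InfinitePlace.apply] at this
        have hfeq : f (InfinitePlace.mk σ) = t := if_neg hσ
        rw [hfeq] at this
        have h0t : (0:ℝ) ≤ (t : ℝ) := t.coe_nonneg
        have : ‖σ (algebraMap (𝓞 K) K a)‖ < (t : ℝ) := this
        linarith
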